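/- For every profile of strict preferences and every ordering of the agents, the discrete assignment produced by the priority (serial dictator) rule is SD-efficient: no random assignment q satisfies q(i) ≿_i^SD p(i) for all agents i with q(j) ≻_j^SD p(j) for some agent j, where p is the priority outcome. -/

import Mathlib

open Finset
open scoped Classical

/-- A (binary-relation) preference over `m` objects; `R a b` means `a ≿ b`. -/
abbrev Pref (m : ℕ) := Fin m → Fin m → Prop

/-- A strict (linear) preference: reflexive, transitive, antisymmetric and total
weak relation `≿`, i.e. a linear order on the objects. -/
def IsStrictPref {m : ℕ} (R : Pref m) : Prop :=
  (∀ a, R a a) ∧ (∀ a b c, R a b → R b c → R a c) ∧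
  (∀ a b, R a b → R b a → a = b) ∧ (∀ a b, R a b ∨ R b a)

/-- A profile of strict preferences, one for each agent. -/
def ValidProfile {n m : ℕ} (pref : Fin n → Pref m) : Prop :=
  ∀ i, IsStrictPref (pref i)

/-- `x` (first-order) stochastically dominates `y` w.r.t. preference `R`:
for every object `o`, the total mass on objects weakly preferred to `o`
under `x` is at least that under `y`. -/
def sdPrefers {m : ℕ} (R : Pref m) (x y : Fin m → ℝ) : Prop :=
  ∀ o : Fin m,
    ∑ o' ∈ univ.filter (fun o' => R o' o), x o' ≥
    ∑ o' ∈ univ.filter (fun o' => R o' o), y o'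

/-- Strict stochastic dominance. -/
def sdStrict {m : ℕ} (R : Pref m) (x y : Fin m → ℝ) : Prop :=
  sdPrefers R x y ∧ ¬ sdPrefers R y x

/-- Strict downward-lexicographic (DL) preference of `x` over `y`:
at the most preferred object where they differ, `x` gives more. -/
def dlStrict {m : ℕ} (R : Pref m) (x y : Fin m → ℝ) : Prop :=
  ∃ o : Fin m, x o > y o ∧ ∀ o', x o' ≠ y o' → R o o'

/-- Weak DL preference. -/
def dlPrefers {m : ℕ} (R : Pref m) (x y : Fin m → ℝ) : Prop :=
  x = y ∨ dlStrict R x y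

/-- A random assignment: entries in `[0,1]`, every object fully allocated
(column sums `1`), every agent receiving `c` units (row sums `c`). -/
def IsRandomAssignment (n m c : ℕ) (p : Fin n → Fin m → ℝ) : Prop :=
  (∀ i o, 0 ≤ p i o ∧ p i o ≤ 1) ∧
  (∀ o, ∑ i, p i o = 1) ∧
  (∀ i, ∑ o, p i o = (c : ℝ))

/-- A discrete (0/1) matrix. -/
def IsDiscreteAssign (n m : ℕ) (p : Fin n → Fin m → ℝ) : Prop :=
  ∀ i o, p i o = 0 ∨ p i o = 1

/-- `p` is SD-efficient at profile `pref`: no random assignment `q` weakly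
SD-dominates it for everyone and strictly for someone. -/
def SDEfficientAssignment (n m c : ℕ) (pref : Fin n → Pref m)
    (p : Fin n → Fin m → ℝ) : Prop :=
  ¬ ∃ q : Fin n → Fin m → ℝ, IsRandomAssignment n m c q ∧
      (∀ i, sdPrefers (pref i) (q i) (p i)) ∧
      ∃ j, sdStrict (pref j) (q j) (p j)

/-- Anonymity of an assignment rule: permuting the agents' reports permutes
their allocations accordingly. -/
def Anonymous (n m : ℕ) (f : (Fin n → Pref m) → Fin n → Fin m → ℝ) : Prop :=
  ∀ (pref : Fin n → Pref m) (σ : Equiv.Perm (Fin n)), ValidProfile pref →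
    ∀ i, f (fun j => pref (σ j)) i = f pref (σ i)

/-- Neutrality of an assignment rule: relabelling the objects (in all
preferences) relabels the returned assignment accordingly. -/
def Neutral (n m : ℕ) (f : (Fin n → Pref m) → Fin n → Fin m → ℝ) : Prop :=
  ∀ (pref : Fin n → Pref m) (τ : Equiv.Perm (Fin m)), ValidProfile pref →
    ∀ i o, f (fun j a b => pref j (τ.symm a) (τ.symm b)) i o = f pref i (τ.symm o)

/-- Weak SD-strategyproofness: no agent can misreport and obtain an allocation
he strictly SD-prefers (w.r.t. his true preference). -/
def WeakSDSP (n m : ℕ) (f : (Fin n → Pref m) → Fin n → Fin m → ℝ) : Prop :=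
  ¬ ∃ (pref : Fin n → Pref m) (i : Fin n) (R' : Pref m),
      ValidProfile pref ∧ IsStrictPref R' ∧
      sdStrict (pref i) (f (Function.update pref i R') i) (f pref i)

/-- Weak SD group-strategyproofness: no nonempty coalition can jointly
misreport so that every member strictly SD-prefers the new allocation. -/
def WeakSDGroupSP (n m : ℕ) (f : (Fin n → Pref m) → Fin n → Fin m → ℝ) : Prop :=
  ¬ ∃ (pref pref' : Fin n → Pref m) (S : Finset (Fin n)),
      ValidProfile pref ∧ S.Nonempty ∧
      (∀ i ∈ S, IsStrictPref (pref' i)) ∧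
      (∀ i ∉ S, pref' i = pref i) ∧
      ∀ i ∈ S, sdStrict (pref i) (f pref' i) (f pref i)

/-- DL-strategyproofness: truth-telling always yields a weakly DL-preferred
allocation. -/
def DLSP (n m : ℕ) (f : (Fin n → Pref m) → Fin n → Fin m → ℝ) : Prop :=
  ∀ (pref : Fin n → Pref m) (i : Fin n) (R' : Pref m),
    ValidProfile pref → IsStrictPref R' →
    dlPrefers (pref i) (f pref i) (f (Function.update pref i R') i)

/-- The set of the `c` most preferred objects under the strict preference `R`:
objects having at most `c` objects weakly preferred to them. -/
noncomputable def topSet (m c : ℕ) (R : Pref m) : Finset (Fin m) :=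
  univ.filter (fun o => (univ.filter (fun o' => R o' o)).card ≤ c)

/-- A perfect assignment: every agent receives each of his `c` most preferred
objects with probability `1`. -/
def PerfectAssignment (n m c : ℕ) (pref : Fin n → Pref m) (p : Fin n → Fin m → ℝ) : Prop :=
  ∀ i, ∀ o ∈ topSet m c (pref i), p i o = 1

/-- Ex post efficiency: `p` is a convex combination of SD-efficient discrete
assignments. -/
def ExPostEfficient (n m c : ℕ) (pref : Fin n → Pref m)
    (p : Fin n → Fin m → ℝ) : Prop :=
  ∃ (k : ℕ) (w : Fin k → ℝ) (d : Fin k → Fin n → Fin m → ℝ),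
    (∀ j, 0 ≤ w j) ∧ (∑ j, w j = 1) ∧
    (∀ j, IsDiscreteAssign n m (d j) ∧ IsRandomAssignment n m c (d j) ∧
          SDEfficientAssignment n m c pref (d j)) ∧
    (∀ i o, p i o = ∑ j, w j * d j i o)

/-- A (possibly unbalanced) 0/1 allocation matrix: 0/1 entries, every object
assigned to exactly one agent. -/
def ZeroOneAlloc (n m : ℕ) (p : Fin n → Fin m → ℝ) : Prop :=
  (∀ i o, p i o = 0 ∨ p i o = 1) ∧ (∀ o, ∑ i, p i o = 1)

/-- Pareto optimality among 0/1 allocation matrices (w.r.t. SD comparisons). -/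
def ParetoOptAlloc (n m : ℕ) (pref : Fin n → Pref m)
    (p : Fin n → Fin m → ℝ) : Prop :=
  ZeroOneAlloc n m p ∧
  ¬ ∃ q : Fin n → Fin m → ℝ, ZeroOneAlloc n m q ∧
      (∀ i, sdPrefers (pref i) (q i) (p i)) ∧
      ∃ j, sdStrict (pref j) (q j) (p j)

/-- `p` is the outcome of the priority (serial dictator) rule for the agent
ordering `σ`: it is a discrete assignment in which, sequentially, agent
`σ k` receives his `c` most preferred objects among those not taken by the
earlier agents `σ 0, …, σ (k-1)`. -/
def PriorityOutcome (n m c : ℕ) (pref : Fin n → Pref m) (σ : Equiv.Perm (Fin n))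
    (p : Fin n → Fin m → ℝ) : Prop :=
  IsDiscreteAssign n m p ∧ IsRandomAssignment n m c p ∧
  ∀ (k : Fin n) (o : Fin m), (∀ j, j < k → p (σ j) o ≠ 1) →
    (p (σ k) o = 1 ↔
      (univ.filter (fun o' => (∀ j, j < k → p (σ j) o' ≠ 1) ∧ pref (σ k) o' o)).card ≤ c)

/-- The strict preference induced by a ranking function (smaller rank =
more preferred). -/
def prefOfRank {m : ℕ} (r : Fin m → ℕ) : Pref m := fun a b => r a ≤ r b

/-- For every profile of strict preferences and every
ordering of the agents, the discrete assignment produced by the priority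
(serial dictator) rule is SD-efficient. -/
theorem priority_outcome_sdEfficient (n c : ℕ)
    (pref : Fin n → Pref (n * c)) (hpref : ValidProfile pref)
    (σ : Equiv.Perm (Fin n)) (p : Fin n → Fin (n * c) → ℝ)
    (hp : PriorityOutcome n (n * c) c pref σ p) :
    SDEfficientAssignment n (n * c) c pref p := by
  obtain ⟨hdisc, ⟨hp01, hpcol, hprow⟩, hprio⟩ := hp
  rintro ⟨q, ⟨hq01, hqcol, hqrow⟩, hdom, j, hsd, hnsd⟩
  -- Main claim: each agent receives under q every object he receives under p.
  have key : ∀ k : Fin n, ∀ o, p (σ k) o = 1 → q (σ k) o = 1 := by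
    intro k
    induction k using WellFoundedLT.induction with
    | ind k IH =>
      intro o hpo
      have hR := hpref (σ k)
      -- o is available for agent σ k
      have hav_o : ∀ j', j' < k → p (σ j') o ≠ 1 := by
        intro j' hj' hpj'
        have hne : σ j' ≠ σ k := fun h => absurd (σ.injective h) (ne_of_lt hj')
        have h2 : (2:ℝ) ≤ ∑ i, p i o := by
          calc (2:ℝ) = p (σ j') o + p (σ k) o := by rw [hpj', hpo]; norm_num
            _ = ∑ i ∈ ({σ j', σ k} : Finset (Fin n)), p i o := (Finset.sum_pair (f := fun i => p i o) hne).symm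
            _ ≤ ∑ i, p i o := Finset.sum_le_sum_of_subset_of_nonneg
                (Finset.subset_univ _) (fun i _ _ => (hp01 i o).1)
        rw [hpcol o] at h2; linarith
      have hcard := (hprio k o hav_o).mp hpo
      -- any object weakly preferred to o that σ k does not get has q-value 0
      have hzero : ∀ o' : Fin (n*c), pref (σ k) o' o → p (σ k) o' ≠ 1 →
          q (σ k) o' = 0 := by
        intro o' hRo' hpne
        by_cases hav : ∀ j', j' < k → p (σ j') o' ≠ 1
        · exfalso
          apply hpne
          rw [hprio k o' hav]
          refine le_trans (Finset.card_le_card ?_) hcard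
          intro x hx
          simp only [Finset.mem_filter, Finset.mem_univ, true_and] at hx ⊢
          exact ⟨hx.1, hR.2.1 _ _ _ hx.2 hRo'⟩
        · push_neg at hav
          obtain ⟨j', hj', hpj'⟩ := hav
          have hq1 : q (σ j') o' = 1 := IH j' hj' o' hpj'
          have hne : σ j' ≠ σ k := fun h => absurd (σ.injective h) (ne_of_lt hj')
          have h2 : q (σ j') o' + q (σ k) o' ≤ 1 := by
            rw [← hqcol o']
            calc q (σ j') o' + q (σ k) o'
                = ∑ i ∈ ({σ j', σ k} : Finset (Fin n)), q i o' := (Finset.sum_pair (f := fun i => q i o') hne).symm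
              _ ≤ ∑ i, q i o' := Finset.sum_le_sum_of_subset_of_nonneg
                  (Finset.subset_univ _) (fun i _ _ => (hq01 i o').1)
          have h3 := (hq01 (σ k) o').1
          linarith
      set U : Finset (Fin (n*c)) := univ.filter (fun o' => pref (σ k) o' o) with hU
      set W : Finset (Fin (n*c)) := U.filter (fun o' => p (σ k) o' = 1) with hW
      have hoW : o ∈ W := by
        simp only [hW, hU, Finset.mem_filter, Finset.mem_univ, true_and]
        exact ⟨hR.1 o, hpo⟩
      have hsum_p : ∑ o' ∈ U, p (σ k) o' = W.card := by
        rw [← Finset.sum_filter_add_sum_filter_not U (fun o' => p (σ k) o' = 1)]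
        have h1 : ∑ o' ∈ U.filter (fun o' => p (σ k) o' = 1), p (σ k) o'
            = (W.card : ℝ) := by
          rw [Finset.sum_congr rfl (fun x hx => (Finset.mem_filter.mp hx).2)]
          simp [hW]
        have h2 : ∑ o' ∈ U.filter (fun o' => ¬ p (σ k) o' = 1), p (σ k) o' = 0 :=
          Finset.sum_eq_zero (fun x hx => by
            rcases hdisc (σ k) x with h | h
            · exact h
            · exact absurd h (Finset.mem_filter.mp hx).2)
        rw [h1, h2, add_zero]
      have hsum_q : ∑ o' ∈ U, q (σ k) o' = ∑ o' ∈ W, q (σ k) o' := by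
        rw [← Finset.sum_filter_add_sum_filter_not U (fun o' => p (σ k) o' = 1)]
        have h2 : ∑ o' ∈ U.filter (fun o' => ¬ p (σ k) o' = 1), q (σ k) o' = 0 :=
          Finset.sum_eq_zero (fun x hx => by
            have hm := Finset.mem_filter.mp hx
            have hmU := Finset.mem_filter.mp (Finset.mem_of_mem_filter x hx)
            exact hzero x hmU.2 hm.2)
        rw [h2, add_zero]
      have hge : ∑ o' ∈ W, q (σ k) o' ≥ (W.card : ℝ) := by
        rw [← hsum_q, ← hsum_p]
        exact hdom (σ k) o
      have hall : ∀ x ∈ W, q (σ k) x = 1 := by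
        by_contra hc
        push_neg at hc
        obtain ⟨x, hx, hne⟩ := hc
        have hlt : ∑ o' ∈ W, q (σ k) o' < ∑ o' ∈ W, (1:ℝ) :=
          Finset.sum_lt_sum (fun i _ => (hq01 (σ k) i).2)
            ⟨x, hx, lt_of_le_of_ne ((hq01 (σ k) x).2) hne⟩
        rw [Finset.sum_const, nsmul_eq_mul, mul_one] at hlt
        linarith
      exact hall o hoW
  -- q = p
  have hqp : ∀ i o, q i o = p i o := by
    intro i
    have hi : σ (σ.symm i) = i := σ.apply_symm_apply i
    set W : Finset (Fin (n*c)) := univ.filter (fun o' => p i o' = 1) with hW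
    have hq1 : ∀ o' ∈ W, q i o' = 1 := by
      intro o' ho'
      have := key (σ.symm i) o' (by rw [hi]; exact (Finset.mem_filter.mp ho').2)
      rwa [hi] at this
    have hsum_p : ∑ o', p i o' = (W.card : ℝ) := by
      rw [← Finset.sum_filter_add_sum_filter_not univ (fun o' => p i o' = 1)]
      have h1 : ∑ o' ∈ W, p i o' = (W.card : ℝ) := by
        rw [Finset.sum_congr rfl (fun x hx => (Finset.mem_filter.mp hx).2)]
        simp [hW]
      have h2 : ∑ o' ∈ univ.filter (fun o' => ¬ p i o' = 1), p i o' = 0 :=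
        Finset.sum_eq_zero (fun x hx => by
          rcases hdisc i x with h | h
          · exact h
          · exact absurd h (Finset.mem_filter.mp hx).2)
      rw [h2, add_zero]; exact h1
    have hsum_qW : ∑ o' ∈ W, q i o' = (W.card : ℝ) := by
      rw [Finset.sum_congr rfl hq1]; simp
    have hsplit : ∑ o' ∈ W, q i o' + ∑ o' ∈ univ.filter (fun o' => ¬ p i o' = 1), q i o'
        = (c : ℝ) := by
      rw [Finset.sum_filter_add_sum_filter_not univ (fun o' => p i o' = 1)]
      exact hqrow i
    have hWc : (W.card : ℝ) = (c : ℝ) := by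
      rw [← hsum_p]; exact hprow i
    have hrest : ∑ o' ∈ univ.filter (fun o' => ¬ p i o' = 1), q i o' = 0 := by
      rw [hsum_qW, hWc] at hsplit; linarith
    have hzero' : ∀ o' ∈ univ.filter (fun o' => ¬ p i o' = 1), q i o' = 0 :=
      (Finset.sum_eq_zero_iff_of_nonneg (fun x _ => (hq01 i x).1)).mp hrest
    intro o
    rcases hdisc i o with h | h
    · rw [h]
      exact hzero' o (Finset.mem_filter.mpr ⟨Finset.mem_univ o, by rw [h]; norm_num⟩)
    · rw [h]
      exact hq1 o (Finset.mem_filter.mpr ⟨Finset.mem_univ o, h⟩)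
  have hqeq : q = p := funext fun i => funext fun o => hqp i o
  rw [hqeq] at hnsd
  exact hnsd (fun o => le_refl _)
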